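/- Let ℓ ≥ 1 and k ≥ 1. Every K_{ℓ,ℓ}-free finite simple graph on n vertices with n ≥ ℓ·(4k)^ℓ has a vertex of degree strictly less than n/k. -/

import Mathlib

/-- `G` is `K_{ℓ,ℓ}`-free: there are no two disjoint sets of vertices `A, B` of size `ℓ`
with every vertex of `A` adjacent to every vertex of `B`. -/
def KllFree {V : Type*} [DecidableEq V] (G : SimpleGraph V) (ℓ : ℕ) : Prop :=
  ¬ ∃ A B : Finset V, Disjoint A B ∧ A.card = ℓ ∧ B.card = ℓ ∧
      ∀ a ∈ A, ∀ b ∈ B, G.Adj a b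

theorem small_degree_vertex {V : Type*} [Fintype V] [DecidableEq V]
    (G : SimpleGraph V) [DecidableRel G.Adj] (ℓ k : ℕ) (hℓ : 1 ≤ ℓ) (hk : 1 ≤ k)
    (hfree : KllFree G ℓ) (hn : ℓ * (4 * k) ^ ℓ ≤ Fintype.card V) :
    ∃ v : V, (G.degree v : ℝ) < (Fintype.card V : ℝ) / k := by
  set n := Fintype.card V with hncard
  by_contra hcon
  push_neg at hcon
  have hk0 : 0 < k := hk
  -- degrees are all at least n / k (in ℕ, with n ≤ k * deg v)
  have hdeg : ∀ v : V, n ≤ k * G.degree v := by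
    intro v
    have h := hcon v
    have hkR : (0 : ℝ) < (k : ℝ) := by exact_mod_cast hk0
    rw [div_le_iff₀ hkR] at h
    have h2 : n ≤ G.degree v * k := by exact_mod_cast h
    calc n ≤ G.degree v * k := h2
      _ = k * G.degree v := Nat.mul_comm _ _
  -- n is positive
  have hn0 : 0 < n := lt_of_lt_of_le (by positivity) hn
  -- Upper bound on common neighborhoods
  have hcommon : ∀ A : Finset V, A.card = ℓ →
      (Finset.univ.filter (fun v => A ⊆ G.neighborFinset v)).card ≤ 2 * ℓ - 1 := by
    intro A hA
    by_contra hbig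
    push_neg at hbig
    set C := Finset.univ.filter (fun v => A ⊆ G.neighborFinset v) with hC
    have h2l : 2 * ℓ ≤ C.card := by omega
    have hCA : ℓ ≤ (C \ A).card := by
      have := Finset.le_card_sdiff A C
      omega
    obtain ⟨B, hBsub, hBcard⟩ := Finset.exists_subset_card_eq hCA
    apply hfree
    refine ⟨A, B, ?_, hA, hBcard, ?_⟩
    · exact ((Finset.sdiff_disjoint).mono_left hBsub).symm
    · intro a ha b hb
      have hbC : b ∈ C := (Finset.sdiff_subset) (hBsub hb)
      rw [hC, Finset.mem_filter] at hbC
      have := hbC.2 ha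
      rw [G.mem_neighborFinset] at this
      exact this.symm
  -- Double counting
  have hcount : ∑ v : V, (G.degree v).choose ℓ ≤ (2 * ℓ - 1) * n.choose ℓ := by
    have h1 : ∀ v : V, (G.degree v).choose ℓ =
        ((Finset.univ.powersetCard ℓ).filter (fun A => A ⊆ G.neighborFinset v)).card := by
      intro v
      rw [← G.card_neighborFinset_eq_degree, ← Finset.card_powersetCard]
      congr 1
      ext A
      simp only [Finset.mem_powersetCard, Finset.mem_filter, Finset.subset_univ, true_and]
      tauto
    calc ∑ v : V, (G.degree v).choose ℓ
        = ∑ v : V, ∑ A ∈ Finset.univ.powersetCard ℓ,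
            (if A ⊆ G.neighborFinset v then 1 else 0) := by
          simp_rw [h1, Finset.card_filter]
      _ = ∑ A ∈ Finset.univ.powersetCard ℓ, ∑ v : V,
            (if A ⊆ G.neighborFinset v then 1 else 0) := Finset.sum_comm
      _ = ∑ A ∈ Finset.univ.powersetCard ℓ,
            (Finset.univ.filter (fun v => A ⊆ G.neighborFinset v)).card := by
          simp_rw [Finset.card_filter]
      _ ≤ ∑ _A ∈ Finset.univ.powersetCard ℓ, (2 * ℓ - 1) := by
          apply Finset.sum_le_sum
          intro A hA
          rw [Finset.mem_powersetCard] at hA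
          exact hcommon A hA.2
      _ = (2 * ℓ - 1) * n.choose ℓ := by
          rw [Finset.sum_const, Finset.card_powersetCard, Finset.card_univ, smul_eq_mul,
            mul_comm]
  -- lower bound: deg v ≥ d₀ := n / k
  set d₀ := n / k with hd₀
  have hdle : ∀ v : V, d₀ ≤ G.degree v := by
    intro v
    rw [hd₀, Nat.div_le_iff_le_mul_add_pred hk0]
    have := hdeg v
    omega
  have hkd₀ : n < k * d₀ + k := by
    have h1 : k * d₀ + n % k = n := Nat.div_add_mod n k
    have h2 : n % k < k := Nat.mod_lt n hk0
    omega
  -- 4kℓ ≤ n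
  have h4kl : 4 * k * ℓ ≤ n := by
    calc 4 * k * ℓ = ℓ * (4 * k) ^ 1 := by ring
      _ ≤ ℓ * (4 * k) ^ ℓ := by
          apply Nat.mul_le_mul_left
          exact Nat.pow_le_pow_right (by omega) hℓ
      _ ≤ n := hn
  have hd₀l : ℓ ≤ d₀ := by
    rw [hd₀, Nat.le_div_iff_mul_le hk0]
    nlinarith [h4kl]
  set e := d₀ + 1 - ℓ with he
  have h3n : 3 * n ≤ 4 * k * e := by
    have hke : k * e + k * ℓ = k * d₀ + k := by
      rw [he, ← Nat.mul_add]
      have : d₀ + 1 - ℓ + ℓ = d₀ + 1 := by omega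
      rw [this, Nat.mul_add, Nat.mul_one]
    have hkl4 : 4 * (k * ℓ) ≤ n := by
      calc 4 * (k * ℓ) = 4 * k * ℓ := by ring
        _ ≤ n := h4kl
    calc 3 * n ≤ 4 * (k * e) := by omega
      _ = 4 * k * e := by ring
  -- main chain
  have hchain : n * e ^ ℓ ≤ (2 * ℓ - 1) * n ^ ℓ := by
    have hle : n * e ^ ℓ ≤ n * d₀.descFactorial ℓ := by
      apply Nat.mul_le_mul_left
      exact Nat.pow_sub_le_descFactorial d₀ ℓ
    have h2 : n * d₀.descFactorial ℓ = n * (ℓ.factorial * d₀.choose ℓ) := by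
      rw [Nat.descFactorial_eq_factorial_mul_choose]
    have h3 : n * d₀.choose ℓ ≤ ∑ v : V, (G.degree v).choose ℓ := by
      calc n * d₀.choose ℓ = ∑ _v : V, d₀.choose ℓ := by
            rw [Finset.sum_const, Finset.card_univ, smul_eq_mul, hncard]
        _ ≤ ∑ v : V, (G.degree v).choose ℓ := by
            apply Finset.sum_le_sum
            intro v _
            exact Nat.choose_le_choose ℓ (hdle v)
    have h4 : (2 * ℓ - 1) * n.choose ℓ * ℓ.factorial ≤ (2 * ℓ - 1) * n ^ ℓ := by
      calc (2 * ℓ - 1) * n.choose ℓ * ℓ.factorial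
          = (2 * ℓ - 1) * (ℓ.factorial * n.choose ℓ) := by ring
        _ = (2 * ℓ - 1) * n.descFactorial ℓ := by
            rw [Nat.descFactorial_eq_factorial_mul_choose]
        _ ≤ (2 * ℓ - 1) * n ^ ℓ :=
            Nat.mul_le_mul_left _ (Nat.descFactorial_le_pow n ℓ)
    calc n * e ^ ℓ ≤ n * (ℓ.factorial * d₀.choose ℓ) := by rw [← h2]; exact hle
      _ = (n * d₀.choose ℓ) * ℓ.factorial := by ring
      _ ≤ (∑ v : V, (G.degree v).choose ℓ) * ℓ.factorial :=
          Nat.mul_le_mul_right _ h3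
      _ ≤ (2 * ℓ - 1) * n.choose ℓ * ℓ.factorial := Nat.mul_le_mul_right _ hcount
      _ ≤ (2 * ℓ - 1) * n ^ ℓ := h4
  -- derive contradiction
  have hfinal : 3 ^ ℓ * n ≤ (2 * ℓ - 1) * (4 * k) ^ ℓ := by
    have h1 : n * (4 * k * e) ^ ℓ ≤ (2 * ℓ - 1) * n ^ ℓ * (4 * k) ^ ℓ := by
      calc n * (4 * k * e) ^ ℓ = n * e ^ ℓ * (4 * k) ^ ℓ := by rw [mul_pow]; ring
        _ ≤ (2 * ℓ - 1) * n ^ ℓ * (4 * k) ^ ℓ :=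
            Nat.mul_le_mul_right _ hchain
    have h2 : (3 * n) ^ ℓ ≤ (4 * k * e) ^ ℓ := Nat.pow_le_pow_left h3n ℓ
    have h3 : 3 ^ ℓ * n * n ^ ℓ ≤ (2 * ℓ - 1) * (4 * k) ^ ℓ * n ^ ℓ := by
      calc 3 ^ ℓ * n * n ^ ℓ = n * (3 * n) ^ ℓ := by rw [mul_pow]; ring
        _ ≤ n * (4 * k * e) ^ ℓ := Nat.mul_le_mul_left _ h2
        _ ≤ (2 * ℓ - 1) * n ^ ℓ * (4 * k) ^ ℓ := h1
        _ = (2 * ℓ - 1) * (4 * k) ^ ℓ * n ^ ℓ := by ring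
    exact Nat.le_of_mul_le_mul_right h3 (Nat.pow_pos hn0)
  have h3l : 3 ^ ℓ * (ℓ * (4 * k) ^ ℓ) ≤ (2 * ℓ - 1) * (4 * k) ^ ℓ := by
    calc 3 ^ ℓ * (ℓ * (4 * k) ^ ℓ) ≤ 3 ^ ℓ * n := Nat.mul_le_mul_left _ hn
      _ ≤ (2 * ℓ - 1) * (4 * k) ^ ℓ := hfinal
  have h3ge : 3 ≤ 3 ^ ℓ := by
    calc 3 = 3 ^ 1 := (pow_one 3).symm
      _ ≤ 3 ^ ℓ := Nat.pow_le_pow_right (by omega) hℓ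
  have hpk : 0 < (4 * k) ^ ℓ := Nat.pow_pos (by omega)
  have hlt : (2 * ℓ - 1) * (4 * k) ^ ℓ < 3 * ℓ * (4 * k) ^ ℓ := by
    have h2 : 2 * ℓ - 1 < 3 * ℓ := by omega
    exact mul_lt_mul_of_pos_right h2 hpk
  have hge : 3 * ℓ * (4 * k) ^ ℓ ≤ 3 ^ ℓ * (ℓ * (4 * k) ^ ℓ) := by
    calc 3 * ℓ * (4 * k) ^ ℓ = 3 * (ℓ * (4 * k) ^ ℓ) := by ring
      _ ≤ 3 ^ ℓ * (ℓ * (4 * k) ^ ℓ) := Nat.mul_le_mul_right _ h3ge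
  linarith
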